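/- Let X be a real random variable with E[X²] < ∞ and variance σ² > 0, let Y = X + Z where Z is standard Gaussian and independent of X, and set a = σ²/(1+σ²). Let ĝ : ℝ → ℂ be integrable and square-integrable and define g(x) = ∫_ℝ ĝ(t) e^{itx} dt. Then E[(X − aY)·g(Y)] = (−i)·∫_ℝ ĝ(t)·φ̃_X(t)·e^{−t²/2} dt, where φ̃_X(t) = (1/(1+σ²))·(φ_X′(t) + σ²·t·φ_X(t)). -/

import Mathlib

open MeasureTheory ProbabilityTheory Real

open scoped Real NNReal ENNReal

noncomputable section

namespace Stmt4Aux

local notation "cexp" => Complex.exp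
local notation "I" => Complex.I

lemma arg_eq (t x : ℝ) : I * (t : ℂ) * (x : ℂ) = ((t * x : ℝ) : ℂ) * I := by
  push_cast; ring

lemma norm_cexp_I (t x : ℝ) : ‖cexp (I * (t : ℂ) * (x : ℂ))‖ = 1 := by
  rw [arg_eq, Complex.norm_exp_ofReal_mul_I]

lemma meas_cexp (t : ℝ) : Measurable fun x : ℝ => cexp (I * (t : ℂ) * (x : ℂ)) := by
  fun_prop

lemma meas_mul_cexp (t : ℝ) : Measurable fun x : ℝ => (x : ℂ) * cexp (I * (t : ℂ) * (x : ℂ)) := by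
  fun_prop

/-- derivative of `s ↦ exp(I s x)` -/
lemma hasDerivAt_cexp (x : ℝ) (t : ℝ) :
    HasDerivAt (fun s : ℝ => cexp (I * (s : ℂ) * (x : ℂ)))
      (I * (x : ℂ) * cexp (I * (t : ℂ) * (x : ℂ))) t := by
  have h : HasDerivAt (fun z : ℂ => cexp (I * z * (x : ℂ)))
      (cexp (I * (t : ℂ) * (x : ℂ)) * (I * (x : ℂ))) (t : ℂ) := by
    have h1 : HasDerivAt (fun z : ℂ => I * z * (x : ℂ)) (I * (x : ℂ)) (t : ℂ) := by
      simpa using (((hasDerivAt_id ((t : ℝ) : ℂ)).const_mul I).mul_const (x : ℂ))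
    simpa using h1.cexp
  have := h.comp_ofReal
  convert this using 1
  ring

/-- differentiation under the integral sign for characteristic functions -/
lemma hasDerivAt_cf (ν : Measure ℝ) [IsProbabilityMeasure ν]
    (hint : Integrable (fun x : ℝ => x) ν) (t : ℝ) :
    HasDerivAt (fun s : ℝ => ∫ x, cexp (I * (s : ℂ) * (x : ℂ)) ∂ν)
      (∫ x, I * (x : ℂ) * cexp (I * (t : ℂ) * (x : ℂ)) ∂ν) t := by
  have hmeas : ∀ s : ℝ, AEStronglyMeasurable (fun x : ℝ => cexp (I * (s : ℂ) * (x : ℂ))) ν :=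
    fun s => (meas_cexp s).aestronglyMeasurable
  have h := hasDerivAt_integral_of_dominated_loc_of_deriv_le (μ := ν)
      (F := fun (s : ℝ) (x : ℝ) => cexp (I * (s : ℂ) * (x : ℂ)))
      (F' := fun (s : ℝ) (x : ℝ) => I * (x : ℂ) * cexp (I * (s : ℂ) * (x : ℂ)))
      (x₀ := t) (bound := fun x => |x|) (Metric.ball_mem_nhds t one_pos)
      (Filter.Eventually.of_forall hmeas)
      ?_ ?_ ?_ ?_ ?_
  · exact h.2
  · refine (integrable_const (1 : ℝ)).mono' (hmeas t) (Filter.Eventually.of_forall fun x => ?_)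
    rw [norm_cexp_I]
  · exact ((Complex.measurable_ofReal.const_mul I).mul (meas_cexp t)).aestronglyMeasurable
  · refine Filter.Eventually.of_forall fun x => fun s _ => le_of_eq ?_
    rw [norm_mul, norm_mul, norm_cexp_I, Complex.norm_I,
      Complex.norm_real]
    simp
  · exact hint.abs
  · exact Filter.Eventually.of_forall fun x => fun s _ => hasDerivAt_cexp x s

lemma gauss_integral_eq (g : ℝ → ℂ) :
    ∫ x, g x ∂(gaussianReal 0 1) = ∫ x : ℝ, (gaussianPDFReal 0 1 x : ℂ) * g x := by
  rw [gaussianReal_of_var_ne_zero 0 one_ne_zero]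
  have hmeas : Measurable fun x => (gaussianPDFReal 0 1 x).toNNReal :=
    (measurable_gaussianPDFReal 0 1).real_toNNReal
  have hpdf : gaussianPDF 0 1 = fun x => (((gaussianPDFReal 0 1 x).toNNReal : ℝ≥0) : ℝ≥0∞) := rfl
  rw [hpdf, integral_withDensity_eq_integral_smul hmeas]
  refine integral_congr_ae (Filter.Eventually.of_forall fun x => ?_)
  simp only [NNReal.smul_def, Real.coe_toNNReal _ (gaussianPDFReal_nonneg 0 1 x),
    Complex.real_smul]

lemma gauss_integrable {E : Type*} [NormedAddCommGroup E] [NormedSpace ℝ E] (g : ℝ → E)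
    (h : Integrable (fun x : ℝ => gaussianPDFReal 0 1 x • g x)) :
    Integrable g (gaussianReal 0 1) := by
  rw [gaussianReal_of_var_ne_zero 0 one_ne_zero]
  have hmeas : Measurable fun x => (gaussianPDFReal 0 1 x).toNNReal :=
    (measurable_gaussianPDFReal 0 1).real_toNNReal
  have hpdf : gaussianPDF 0 1 = fun x => (((gaussianPDFReal 0 1 x).toNNReal : ℝ≥0) : ℝ≥0∞) := rfl
  rw [hpdf, integrable_withDensity_iff_integrable_smul hmeas]
  refine h.congr (Filter.Eventually.of_forall fun x => ?_)
  simp only [NNReal.smul_def, Real.coe_toNNReal _ (gaussianPDFReal_nonneg 0 1 x)]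

lemma pdf_eq (x : ℝ) :
    (gaussianPDFReal 0 1 x : ℂ) = ((Real.sqrt (2 * π))⁻¹ : ℝ) * cexp (-(1 / 2 : ℂ) * (x : ℂ) ^ 2) := by
  rw [gaussianPDFReal_def]
  push_cast
  rw [show (-((x:ℂ) - 0) ^ 2 / (2 * 1)) = -(1 / 2 : ℂ) * (x : ℂ) ^ 2 by ring,
    show (2 * π * 1 : ℝ) = 2 * π by ring]

lemma pdf_real_eq (x : ℝ) :
    gaussianPDFReal 0 1 x = (Real.sqrt (2 * π))⁻¹ * Real.exp (-(1 / 2) * x ^ 2) := by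
  rw [gaussianPDFReal_def]
  simp only [NNReal.coe_one, mul_one, sub_zero]
  congr 1
  ring

lemma gauss_integrable_id : Integrable (fun x : ℝ => x) (gaussianReal 0 1) := by
  apply gauss_integrable
  have : Integrable (fun x : ℝ => (Real.sqrt (2 * π))⁻¹ * (x * Real.exp (-(1 / 2) * x ^ 2))) :=
    (integrable_mul_exp_neg_mul_sq (by norm_num : (0 : ℝ) < 1 / 2)).const_mul _
  refine this.congr (Filter.Eventually.of_forall fun x => ?_)
  simp only [smul_eq_mul, pdf_real_eq]
  ring

lemma sqrt_two_pi_pos : (0 : ℝ) < Real.sqrt (2 * π) :=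
  Real.sqrt_pos.mpr (by positivity)

lemma gauss_cf (t : ℝ) :
    ∫ x, cexp (I * (t : ℂ) * (x : ℂ)) ∂(gaussianReal 0 1) = cexp (-(t : ℂ) ^ 2 / 2) := by
  rw [gauss_integral_eq]
  have h : ∀ x : ℝ, (gaussianPDFReal 0 1 x : ℂ) * cexp (I * (t : ℂ) * (x : ℂ)) =
      ((Real.sqrt (2 * π))⁻¹ : ℝ) *
        (cexp (I * (t : ℂ) * (x : ℂ)) * cexp (-(1 / 2 : ℂ) * (x : ℂ) ^ 2)) := by
    intro x; rw [pdf_eq]; ring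
  simp_rw [h]
  rw [integral_const_mul, fourierIntegral_gaussian (by norm_num : (0 : ℝ) < ((1:ℂ)/2).re) (t : ℂ)]
  have h2 : ((π : ℂ) / (1 / 2)) ^ (1 / 2 : ℂ) = (Real.sqrt (2 * π) : ℂ) := by
    rw [show ((π : ℂ) / (1 / 2)) = ((2 * π : ℝ) : ℂ) by push_cast; ring]
    rw [show ((1 / 2 : ℂ)) = ((1 / 2 : ℝ) : ℂ) by push_cast; ring]
    rw [← Complex.ofReal_cpow (by positivity) (1 / 2), ← Real.sqrt_eq_rpow]
  rw [h2, show (-(t:ℂ) ^ 2 / (4 * (1 / 2))) = -(t:ℂ) ^ 2 / 2 by ring]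
  have hne : ((Real.sqrt (2 * π) : ℝ) : ℂ) ≠ 0 := by
    exact_mod_cast sqrt_two_pi_pos.ne'
  push_cast
  rw [inv_mul_cancel_left₀ hne]

lemma gauss_moment (t : ℝ) :
    ∫ x, (x : ℂ) * cexp (I * (t : ℂ) * (x : ℂ)) ∂(gaussianReal 0 1)
      = I * (t : ℂ) * cexp (-(t : ℂ) ^ 2 / 2) := by
  have h1 := hasDerivAt_cf (gaussianReal 0 1) gauss_integrable_id t
  have heq : (fun s : ℝ => ∫ x, cexp (I * (s : ℂ) * (x : ℂ)) ∂(gaussianReal 0 1))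
      = fun s : ℝ => cexp (-(s : ℂ) ^ 2 / 2) := funext fun s => gauss_cf s
  rw [heq] at h1
  have h2 : HasDerivAt (fun s : ℝ => cexp (-(s : ℂ) ^ 2 / 2))
      (-(t : ℂ) * cexp (-(t : ℂ) ^ 2 / 2)) t := by
    have hin : HasDerivAt (fun z : ℂ => -z ^ 2 / 2) (-(t : ℂ)) ((t : ℝ) : ℂ) := by
      have := (((hasDerivAt_id (((t : ℝ)) : ℂ)).pow 2).neg.div_const 2)
      exact this.congr_deriv (by simp; ring)
    have hi := hin.cexp
    have := hi.comp_ofReal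
    convert this using 1
    ring
  have h3 := h1.unique h2
  rw [show (fun x : ℝ => I * (x : ℂ) * cexp (I * (t : ℂ) * (x : ℂ)))
      = fun x : ℝ => I * ((x : ℂ) * cexp (I * (t : ℂ) * (x : ℂ))) from funext fun x => by ring,
    integral_const_mul] at h3
  set S := ∫ x, (x : ℂ) * cexp (I * (t : ℂ) * (x : ℂ)) ∂(gaussianReal 0 1)
  linear_combination (-Complex.I) * h3 + S * Complex.I_sq

lemma indep_mul {Ω : Type*} {mΩ : MeasurableSpace Ω} {μ : Measure Ω} [IsProbabilityMeasure μ]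
    {X Z : Ω → ℝ} (hX : Measurable X) (hZ : Measurable Z) (hindep : IndepFun X Z μ)
    {F G : ℝ → ℂ} (hF : Measurable F) (hG : Measurable G) :
    ∫ ω, F (X ω) * G (Z ω) ∂μ = (∫ ω, F (X ω) ∂μ) * ∫ ω, G (Z ω) ∂μ := by
  haveI : IsProbabilityMeasure (μ.map X) := Measure.isProbabilityMeasure_map hX.aemeasurable
  haveI : IsProbabilityMeasure (μ.map Z) := Measure.isProbabilityMeasure_map hZ.aemeasurable
  have hmap := (indepFun_iff_map_prod_eq_prod_map_map hX.aemeasurable hZ.aemeasurable).mp hindep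
  have hpair : Measurable fun ω => (X ω, Z ω) := hX.prodMk hZ
  calc ∫ ω, F (X ω) * G (Z ω) ∂μ
      = ∫ p : ℝ × ℝ, F p.1 * G p.2 ∂(μ.map fun ω => (X ω, Z ω)) :=
        (integral_map hpair.aemeasurable
          ((hF.comp measurable_fst).mul (hG.comp measurable_snd)).aestronglyMeasurable).symm
    _ = ∫ p : ℝ × ℝ, F p.1 * G p.2 ∂((μ.map X).prod (μ.map Z)) := by rw [hmap]
    _ = (∫ x, F x ∂(μ.map X)) * ∫ y, G y ∂(μ.map Z) := integral_prod_mul F G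
    _ = _ := by
        rw [integral_map hX.aemeasurable hF.aestronglyMeasurable,
          integral_map hZ.aemeasurable hG.aestronglyMeasurable]

end Stmt4Aux

end

open Stmt4Aux in
theorem stmt_4 {Ω : Type*} {mΩ : MeasurableSpace Ω} (μ : Measure Ω) [IsProbabilityMeasure μ]
    (X Z Y : Ω → ℝ) (hX : Measurable X) (hZ : Measurable Z)
    (hZ_gauss : μ.map Z = gaussianReal 0 1)
    (hindep : IndepFun X Z μ)
    (hXL2 : MemLp X 2 μ)
    (σ2 : ℝ) (hσ2 : 0 < σ2) (hvar : variance X μ = σ2)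
    (hY : Y = fun ω => X ω + Z ω)
    (a : ℝ) (ha : a = σ2 / (1 + σ2))
    (ghat : ℝ → ℂ) (hghat1 : Integrable ghat) (hghat2 : MemLp ghat 2 volume)
    (g : ℝ → ℂ) (hg : g = fun x : ℝ => ∫ t : ℝ, ghat t * Complex.exp (Complex.I * (t : ℂ) * (x : ℂ)))
    (φ : ℝ → ℂ) (hφ : φ = fun t : ℝ => ∫ ω, Complex.exp (Complex.I * (t : ℂ) * (X ω : ℂ)) ∂μ) :
    ∫ ω, ((X ω - a * Y ω : ℝ) : ℂ) * g (Y ω) ∂μ =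
      (-Complex.I) * ∫ t : ℝ,
          ghat t * ((1 / (1 + σ2 : ℂ)) * (deriv φ t + (σ2 : ℂ) * (t : ℂ) * φ t)) *
            Complex.exp (-((t : ℂ) ^ 2) / 2) := by
  have hYw : ∀ ω, Y ω = X ω + Z ω := fun ω => by rw [hY]
  have hYm : Measurable Y := by rw [hY]; exact hX.add hZ
  have hgw : ∀ x : ℝ, g x = ∫ t : ℝ, ghat t * Complex.exp (Complex.I * (t : ℂ) * (x : ℂ)) :=
    fun x => by rw [hg]
  have hXi : Integrable X μ := hXL2.integrable one_le_two
  have hZi : Integrable Z μ := by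
    have h := gauss_integrable_id
    rw [← hZ_gauss] at h
    exact (integrable_map_measure aestronglyMeasurable_id hZ.aemeasurable).mp h
  have hAr : Integrable (fun ω => X ω - a * Y ω) μ := by
    refine hXi.sub ?_
    have : Integrable (fun ω => a * Y ω) μ := by
      refine Integrable.const_mul ?_ a
      have := hXi.add hZi
      refine this.congr (Filter.Eventually.of_forall fun ω => (hYw ω).symm)
    exact this
  have hAi : Integrable (fun ω => ((X ω - a * Y ω : ℝ) : ℂ)) μ := hAr.ofReal
  -- Fubini
  have hK : Integrable (Function.uncurry fun ω t =>
      ((X ω - a * Y ω : ℝ) : ℂ) * (ghat t * Complex.exp (Complex.I * (t : ℂ) * (Y ω : ℂ))))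
      (μ.prod volume) := by
    have hb : Integrable (fun p : Ω × ℝ => |X p.1 - a * Y p.1| * ‖ghat p.2‖) (μ.prod volume) :=
      hAr.abs.mul_prod hghat1.norm
    refine hb.mono' ?_ ?_
    · have m1 : Measurable (fun p : Ω × ℝ => ((X p.1 - a * Y p.1 : ℝ) : ℂ)) :=
        Complex.measurable_ofReal.comp
          ((hX.comp measurable_fst).sub ((hYm.comp measurable_fst).const_mul a))
      have m2 : AEStronglyMeasurable (fun p : Ω × ℝ => ghat p.2) (μ.prod volume) :=
        hghat1.aestronglyMeasurable.comp_snd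
      have m3 : Measurable
          (fun p : Ω × ℝ => Complex.exp (Complex.I * (p.2 : ℂ) * (Y p.1 : ℂ))) :=
        Complex.measurable_exp.comp
          ((measurable_const.mul (Complex.measurable_ofReal.comp measurable_snd)).mul
            (Complex.measurable_ofReal.comp (hYm.comp measurable_fst)))
      exact m1.aestronglyMeasurable.mul (m2.mul m3.aestronglyMeasurable)
    · refine Filter.Eventually.of_forall fun p => le_of_eq ?_
      simp only [Function.uncurry, norm_mul, norm_cexp_I, mul_one, Complex.norm_real,
        Real.norm_eq_abs]
  have hLHS : ∫ ω, ((X ω - a * Y ω : ℝ) : ℂ) * g (Y ω) ∂μ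
      = ∫ t : ℝ, ghat t * ∫ ω, ((X ω - a * Y ω : ℝ) : ℂ) *
          Complex.exp (Complex.I * (t : ℂ) * (Y ω : ℂ)) ∂μ := by
    calc ∫ ω, ((X ω - a * Y ω : ℝ) : ℂ) * g (Y ω) ∂μ
        = ∫ ω, (∫ t : ℝ, ((X ω - a * Y ω : ℝ) : ℂ) *
            (ghat t * Complex.exp (Complex.I * (t : ℂ) * (Y ω : ℂ)))) ∂μ := by
          refine integral_congr_ae (Filter.Eventually.of_forall fun ω => ?_)
          show ((X ω - a * Y ω : ℝ) : ℂ) * g (Y ω) = _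
          rw [hgw (Y ω)]
          exact (integral_const_mul _ _).symm
      _ = ∫ t : ℝ, ∫ ω, ((X ω - a * Y ω : ℝ) : ℂ) *
            (ghat t * Complex.exp (Complex.I * (t : ℂ) * (Y ω : ℂ))) ∂μ := by
          exact integral_integral_swap hK
      _ = ∫ t : ℝ, ghat t * ∫ ω, ((X ω - a * Y ω : ℝ) : ℂ) *
            Complex.exp (Complex.I * (t : ℂ) * (Y ω : ℂ)) ∂μ := by
          refine integral_congr_ae (Filter.Eventually.of_forall fun t => ?_)
          show _ = ghat t * ∫ ω, ((X ω - a * Y ω : ℝ) : ℂ) *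
            Complex.exp (Complex.I * (t : ℂ) * (Y ω : ℂ)) ∂μ
          rw [← integral_const_mul]
          exact integral_congr_ae (Filter.Eventually.of_forall fun ω => by ring)
  -- pointwise computation
  have h1σR : (1 + σ2 : ℝ) ≠ 0 := by positivity
  have h1σ : (1 + σ2 : ℂ) ≠ 0 := by
    simpa using (Complex.ofReal_ne_zero.mpr h1σR)
  have key : ∀ t : ℝ, ∫ ω, ((X ω - a * Y ω : ℝ) : ℂ) *
        Complex.exp (Complex.I * (t : ℂ) * (Y ω : ℂ)) ∂μ
      = -Complex.I * ((1 / (1 + σ2 : ℂ)) * (deriv φ t + (σ2 : ℂ) * (t : ℂ) * φ t)) *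
          Complex.exp (-((t : ℂ) ^ 2) / 2) := by
    intro t
    have hsplit : ∀ ω, ((X ω - a * Y ω : ℝ) : ℂ) *
        Complex.exp (Complex.I * (t : ℂ) * (Y ω : ℂ))
        = ((1 - a : ℝ) : ℂ) * (((X ω : ℂ) * Complex.exp (Complex.I * (t : ℂ) * (X ω : ℂ))) *
            Complex.exp (Complex.I * (t : ℂ) * (Z ω : ℂ)))
          - (a : ℂ) * (Complex.exp (Complex.I * (t : ℂ) * (X ω : ℂ)) *
            ((Z ω : ℂ) * Complex.exp (Complex.I * (t : ℂ) * (Z ω : ℂ)))) := by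
      intro ω
      rw [hYw ω]
      have hexp : Complex.exp (Complex.I * (t : ℂ) * ((X ω + Z ω : ℝ) : ℂ))
          = Complex.exp (Complex.I * (t : ℂ) * (X ω : ℂ)) *
            Complex.exp (Complex.I * (t : ℂ) * (Z ω : ℂ)) := by
        rw [← Complex.exp_add]; congr 1; push_cast; ring
      push_cast
      push_cast at hexp
      rw [hexp]
      ring
    have hi1 : Integrable (fun ω => ((X ω : ℂ) * Complex.exp (Complex.I * (t : ℂ) * (X ω : ℂ))) *
        Complex.exp (Complex.I * (t : ℂ) * (Z ω : ℂ))) μ := by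
      refine hXi.norm.mono'
        ((((meas_mul_cexp t).comp hX).mul ((meas_cexp t).comp hZ)).aestronglyMeasurable)
        (Filter.Eventually.of_forall fun ω => le_of_eq ?_)
      simp only [norm_mul, norm_cexp_I, mul_one, Complex.norm_real, Real.norm_eq_abs]
    have hi2 : Integrable (fun ω => Complex.exp (Complex.I * (t : ℂ) * (X ω : ℂ)) *
        ((Z ω : ℂ) * Complex.exp (Complex.I * (t : ℂ) * (Z ω : ℂ)))) μ := by
      refine hZi.norm.mono'
        ((((meas_cexp t).comp hX).mul ((meas_mul_cexp t).comp hZ)).aestronglyMeasurable)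
        (Filter.Eventually.of_forall fun ω => le_of_eq ?_)
      simp only [norm_mul, norm_cexp_I, one_mul, mul_one, Complex.norm_real, Real.norm_eq_abs]
    have hind1 : ∫ ω, ((X ω : ℂ) * Complex.exp (Complex.I * (t : ℂ) * (X ω : ℂ))) *
        Complex.exp (Complex.I * (t : ℂ) * (Z ω : ℂ)) ∂μ
        = (∫ ω, (X ω : ℂ) * Complex.exp (Complex.I * (t : ℂ) * (X ω : ℂ)) ∂μ) *
          ∫ ω, Complex.exp (Complex.I * (t : ℂ) * (Z ω : ℂ)) ∂μ :=
      indep_mul hX hZ hindep (meas_mul_cexp t) (meas_cexp t)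
    have hind2 : ∫ ω, Complex.exp (Complex.I * (t : ℂ) * (X ω : ℂ)) *
        ((Z ω : ℂ) * Complex.exp (Complex.I * (t : ℂ) * (Z ω : ℂ))) ∂μ
        = (∫ ω, Complex.exp (Complex.I * (t : ℂ) * (X ω : ℂ)) ∂μ) *
          ∫ ω, (Z ω : ℂ) * Complex.exp (Complex.I * (t : ℂ) * (Z ω : ℂ)) ∂μ :=
      indep_mul hX hZ hindep (meas_cexp t) (meas_mul_cexp t)
    have hG1Z : ∫ ω, Complex.exp (Complex.I * (t : ℂ) * (Z ω : ℂ)) ∂μ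
        = Complex.exp (-(t : ℂ) ^ 2 / 2) := by
      rw [← gauss_cf t, ← hZ_gauss,
        integral_map hZ.aemeasurable (meas_cexp t).aestronglyMeasurable]
    have hF1Z : ∫ ω, (Z ω : ℂ) * Complex.exp (Complex.I * (t : ℂ) * (Z ω : ℂ)) ∂μ
        = Complex.I * (t : ℂ) * Complex.exp (-(t : ℂ) ^ 2 / 2) := by
      rw [← gauss_moment t, ← hZ_gauss,
        integral_map hZ.aemeasurable (meas_mul_cexp t).aestronglyMeasurable]
    have hφt : φ t = ∫ ω, Complex.exp (Complex.I * (t : ℂ) * (X ω : ℂ)) ∂μ := by rw [hφ]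
    -- derivative of φ
    haveI : IsProbabilityMeasure (μ.map X) := Measure.isProbabilityMeasure_map hX.aemeasurable
    have hXid : Integrable (fun x : ℝ => x) (μ.map X) :=
      (integrable_map_measure aestronglyMeasurable_id hX.aemeasurable).mpr hXi
    have hφmap : φ = fun s : ℝ => ∫ x, Complex.exp (Complex.I * (s : ℂ) * (x : ℂ)) ∂(μ.map X) := by
      funext s
      rw [hφ, integral_map hX.aemeasurable (meas_cexp s).aestronglyMeasurable]
    have hd := hasDerivAt_cf (μ.map X) hXid t
    rw [← hφmap] at hd
    have hSx : deriv φ t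
        = Complex.I * ∫ ω, (X ω : ℂ) * Complex.exp (Complex.I * (t : ℂ) * (X ω : ℂ)) ∂μ := by
      rw [hd.deriv,
        show (fun x : ℝ => Complex.I * (x : ℂ) * Complex.exp (Complex.I * (t : ℂ) * (x : ℂ)))
          = fun x : ℝ => Complex.I * ((x : ℂ) * Complex.exp (Complex.I * (t : ℂ) * (x : ℂ)))
          from funext fun x => by ring,
        integral_const_mul,
        integral_map hX.aemeasurable (meas_mul_cexp t).aestronglyMeasurable]
    have haC : (a : ℂ) = (σ2 : ℂ) / (1 + σ2) := by rw [ha]; push_cast; ring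
    calc ∫ ω, ((X ω - a * Y ω : ℝ) : ℂ) * Complex.exp (Complex.I * (t : ℂ) * (Y ω : ℂ)) ∂μ
        = ∫ ω, (((1 - a : ℝ) : ℂ) * (((X ω : ℂ) *
              Complex.exp (Complex.I * (t : ℂ) * (X ω : ℂ))) *
              Complex.exp (Complex.I * (t : ℂ) * (Z ω : ℂ)))
            - (a : ℂ) * (Complex.exp (Complex.I * (t : ℂ) * (X ω : ℂ)) *
              ((Z ω : ℂ) * Complex.exp (Complex.I * (t : ℂ) * (Z ω : ℂ))))) ∂μ :=
          integral_congr_ae (Filter.Eventually.of_forall hsplit)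
      _ = ((1 - a : ℝ) : ℂ) * ((∫ ω, (X ω : ℂ) *
              Complex.exp (Complex.I * (t : ℂ) * (X ω : ℂ)) ∂μ) *
              ∫ ω, Complex.exp (Complex.I * (t : ℂ) * (Z ω : ℂ)) ∂μ)
          - (a : ℂ) * ((∫ ω, Complex.exp (Complex.I * (t : ℂ) * (X ω : ℂ)) ∂μ) *
              ∫ ω, (Z ω : ℂ) * Complex.exp (Complex.I * (t : ℂ) * (Z ω : ℂ)) ∂μ) := by
          rw [integral_sub (hi1.const_mul _) (hi2.const_mul _), integral_const_mul,
            integral_const_mul, hind1, hind2]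
      _ = -Complex.I * ((1 / (1 + σ2 : ℂ)) * (deriv φ t + (σ2 : ℂ) * (t : ℂ) * φ t)) *
            Complex.exp (-((t : ℂ) ^ 2) / 2) := by
          rw [hG1Z, hF1Z, ← hφt, hSx]
          push_cast [haC]
          have hE := Complex.I_sq
          field_simp
          have hXX : ∫ ω, (X ω : ℂ) * Complex.exp ((X ω : ℂ) * Complex.I * (t : ℂ)) ∂μ
              = ∫ ω, (X ω : ℂ) * Complex.exp (Complex.I * (t : ℂ) * (X ω : ℂ)) ∂μ :=
            integral_congr_ae (Filter.Eventually.of_forall fun ω => by ring_nf)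
          rw [hXX]
          linear_combination ((∫ ω, (X ω : ℂ) *
            Complex.exp (Complex.I * (t : ℂ) * (X ω : ℂ)) ∂μ)) * hE
  rw [hLHS, ← integral_const_mul]
  refine integral_congr_ae (Filter.Eventually.of_forall fun t => ?_)
  show ghat t * _ = _
  rw [key t]
  ring
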